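/- Suppose conditions (d1) and (d2) hold. Then for every R ∈ (0,∞) there exist constants p, h₀ ∈ (0,∞) such that for every h ∈ (0,h₀) and all x, y ∈ ℝ^d with ‖x‖₋ ≤ R, ‖y‖₋ ≤ R and |x−y| ≤ √h: P_{x,y}[X̃ = Ỹ] ≥ p, where (X̃, Ỹ) is the coupling of MALA transition steps from x and y. -/

import Mathlib

open MeasureTheory ProbabilityTheory Set
open scoped ENNReal Classical RealInnerProductSpace

noncomputable section

/-- Euclidean state space `ℝ^d`. -/
abbrev Ed (d : ℕ) := EuclideanSpace ℝ (Fin d)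

/-- The standard Gaussian measure `N(0, I_d)` on `ℝ^d`. -/
def stdGaussian (d : ℕ) : Measure (Ed d) :=
  (Measure.pi fun _ : Fin d => gaussianReal 0 1).map
    (MeasurableEquiv.toLp 2 (Fin d → ℝ))

/-- The uniform distribution on the unit interval. -/
def unif01 : Measure ℝ := volume.restrict (Set.Ioc (0:ℝ) 1)

variable {d : ℕ}

/-- The potential `U(x) = |x|²/2 + V(x)`. -/
def Ufn (V : Ed d → ℝ) (x : Ed d) : ℝ := ‖x‖ ^ 2 / 2 + V x

/-- The proposal variance `h − h²/4`. -/
def sVar (h : ℝ) : ℝ := h - h ^ 2 / 4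

/-- The proposal mean `x̂ = x − (h/2)x − (h/2)∇V(x)`. -/
def hatM (h : ℝ) (V : Ed d → ℝ) (x : Ed d) : Ed d :=
  x - (h / 2) • x - (h / 2) • gradient V x

/-- Lebesgue density of `N(m, s·I_d)` at `w`. -/
def gaussDens (s : ℝ) (m w : Ed d) : ℝ :=
  (2 * Real.pi * s) ^ (-(d : ℝ) / 2) * Real.exp (-‖w - m‖ ^ 2 / (2 * s))

/-- The Metropolis–Hastings acceptance probability
`α_h(x,y) = min(1, μ(y)p_h(y,x)/(μ(x)p_h(x,y)))` for the target `μ ∝ e^{−U}` and the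
semi-implicit Euler proposal kernel `p_h(x,·) = N(x̂, (h−h²/4)I_d)`. -/
def acc (h : ℝ) (V : Ed d → ℝ) (x y : Ed d) : ℝ :=
  min 1 (Real.exp (-Ufn V y) * gaussDens (sVar h) (hatM h V y) x /
    (Real.exp (-Ufn V x) * gaussDens (sVar h) (hatM h V x) y))

/-- Density ratio `φ_ŷ(w)/φ_x̂(w)` of the proposal densities. -/
def propRatio (h : ℝ) (xh yh w : Ed d) : ℝ :=
  Real.exp ((‖w - xh‖ ^ 2 - ‖w - yh‖ ^ 2) / (2 * sVar h))

/-- The reflected proposal `ŷ + √(h−h²/4)·(I − 2êêᵀ)z`. -/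
def reflPt (h : ℝ) (xh yh z : Ed d) : Ed d :=
  yh + Real.sqrt (sVar h) •
    (z - (2 * ⟪‖xh - yh‖⁻¹ • (xh - yh), z⟫) • (‖xh - yh‖⁻¹ • (xh - yh)))

/-- The coupled MALA transition step `(X̃, Ỹ)` from `(x,y)`, as a function of the noise
`z = ω.1.1`, the uniform variable `u = ω.1.2` coupling the proposals, and the common
uniform variable `ũ = ω.2` used in the accept/reject step. -/
def malaCpl (h : ℝ) (V : Ed d → ℝ) (x y : Ed d) (ω : (Ed d × ℝ) × ℝ) : Ed d × Ed d :=
  let xh := hatM h V x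
  let yh := hatM h V y
  let X' := xh + Real.sqrt (sVar h) • ω.1.1
  let Y' := if ω.1.2 ≤ propRatio h xh yh X' then X' else reflPt h xh yh ω.1.1
  (if ω.2 ≤ acc h V x X' then X' else x,
   if ω.2 ≤ acc h V y Y' then Y' else y)

/-- The joint law of the coupled MALA transition steps `(X̃, Ỹ)` from `x` and `y`. -/
def malaMeasure (h : ℝ) (V : Ed d → ℝ) (x y : Ed d) : Measure (Ed d × Ed d) :=
  (((stdGaussian d).prod unif01).prod unif01).map (malaCpl h V x y)

/-- Comparison of the auxiliary norm `‖·‖₋` with the Euclidean norm: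
`‖x‖₋ ≤ |x| ≤ d·‖x‖₋`. -/
def NormComp (d : ℕ) (nm : Seminorm ℝ (Ed d)) : Prop :=
  ∀ x : Ed d, nm x ≤ ‖x‖ ∧ ‖x‖ ≤ d * nm x

/-- Condition (d1): bounds on the derivatives of `U` up to order 4 in terms of `‖·‖₋`. -/
def CondD1 (V : Ed d → ℝ) (nm : Seminorm ℝ (Ed d)) (C : ℕ → ℝ) (p : ℕ → ℕ) : Prop :=
  ∀ n : ℕ, 1 ≤ n → n ≤ 4 → ∀ (x : Ed d) (ξ : Fin n → Ed d),
    |iteratedFDeriv ℝ n (Ufn V) x ξ| ≤ C n * max 1 (nm x ^ p n) * ∏ i, nm (ξ i)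

/-- Condition (d2): strict convexity of `U` outside the Euclidean ball of radius `Rc`. -/
def CondD2 (V : Ed d → ℝ) (Kc Rc : ℝ) : Prop :=
  ∀ x ξ : Ed d, Rc ≤ ‖x‖ → Kc * ‖ξ‖ ^ 2 ≤ iteratedFDeriv ℝ 2 (Ufn V) x ![ξ, ξ]

/-! ### Auxiliary lemmas -/

lemma gaussPos (hd : 1 ≤ d) : 0 < stdGaussian d (Metric.closedBall 0 1) := by
  rw [_root_.stdGaussian, MeasurableEquiv.map_apply]
  set c : ℝ := (d : ℝ)⁻¹ with hc
  have hdpos : (0:ℝ) < d := by exact_mod_cast hd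
  have hcpos : 0 < c := by positivity
  have hsub : (Set.pi univ fun _ : Fin d => Icc (-c) c) ⊆
      (MeasurableEquiv.toLp 2 (Fin d → ℝ)) ⁻¹' Metric.closedBall 0 1 := by
    intro z hz
    simp only [Set.mem_preimage, Metric.mem_closedBall, dist_zero_right]
    have hzi : ∀ i, |z i| ≤ c := by
      intro i
      have := hz i (Set.mem_univ i)
      rw [abs_le]; exact ⟨this.1, this.2⟩
    have happ : ∀ i, ((MeasurableEquiv.toLp 2 (Fin d → ℝ)) z) i = z i := fun i => rfl
    rw [EuclideanSpace.norm_eq]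
    rw [show (1:ℝ) = Real.sqrt 1 by simp]
    apply Real.sqrt_le_sqrt
    calc ∑ i, ‖((MeasurableEquiv.toLp 2 (Fin d → ℝ)) z) i‖ ^ 2
        ≤ ∑ _i : Fin d, c ^ 2 := by
          apply Finset.sum_le_sum
          intro i _
          rw [happ i, Real.norm_eq_abs]
          exact pow_le_pow_left₀ (abs_nonneg _) (hzi i) 2
      _ = d * c ^ 2 := by simp [mul_comm]
      _ ≤ 1 := by
          rw [hc, inv_pow, mul_inv_le_iff₀ (by positivity)]
          have : (1:ℝ) ≤ (d:ℝ) := by exact_mod_cast hd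
          nlinarith
  refine lt_of_lt_of_le ?_ (measure_mono hsub)
  rw [Measure.pi_pi]
  have hfac : ∀ i : Fin d, (0:ℝ≥0∞) < gaussianReal 0 1 (Icc (-c) c) := by
    intro i
    rw [pos_iff_ne_zero]
    intro h0
    have habs := gaussianReal_absolutelyContinuous' (0:ℝ) (v := 1) one_ne_zero
    have := habs h0
    rw [Real.volume_Icc] at this
    simp only [ENNReal.ofReal_eq_zero] at this
    linarith
  rw [pos_iff_ne_zero, Finset.prod_ne_zero_iff]
  intro i _
  exact (hfac i).ne'

theorem fderivU (V : Ed d → ℝ) (hV : ContDiff ℝ 4 V) (x ξ : Ed d) :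
    fderiv ℝ (Ufn V) x ξ = ⟪x + gradient V x, ξ⟫ := by
  have h1 : HasFDerivAt (fun x : Ed d => ‖x‖^2/2) ((2:ℝ)⁻¹ • (2 • (innerSL ℝ x))) x := by
    have := ((hasStrictFDerivAt_norm_sq x).hasFDerivAt).const_smul (2:ℝ)⁻¹
    refine this.congr_of_eventuallyEq (Filter.Eventually.of_forall fun y => ?_)
    simp only [Pi.smul_apply, smul_eq_mul]; ring
  have h2 : HasFDerivAt V (fderiv ℝ V x) x :=
    (hV.differentiable (by norm_num)).differentiableAt.hasFDerivAt
  have h3 : HasFDerivAt (Ufn V) ((2:ℝ)⁻¹ • (2 • (innerSL ℝ x)) + fderiv ℝ V x) x := h1.add h2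
  rw [h3.fderiv]
  have : fderiv ℝ V x ξ = ⟪gradient V x, ξ⟫ := by
    unfold gradient; rw [InnerProductSpace.toDual_symm_apply]
  rw [ContinuousLinearMap.add_apply, this, inner_add_left]
  simp only [ContinuousLinearMap.smul_apply, innerSL_apply_apply, smul_eq_mul, nsmul_eq_mul]
  push_cast; ring

theorem gradBound (V : Ed d → ℝ) (hV : ContDiff ℝ 4 V) (nm : Seminorm ℝ (Ed d))
    (hnm : NormComp d nm) (C : ℕ → ℝ) (p : ℕ → ℕ) (hC1 : 0 ≤ C 1)
    (hd1 : CondD1 V nm C p) (x : Ed d) :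
    ‖x + gradient V x‖ ≤ C 1 * max 1 (nm x ^ p 1) := by
  set g := x + gradient V x with hg
  have h1 := hd1 1 le_rfl (by norm_num) x (fun _ => g)
  rw [iteratedFDeriv_one_apply] at h1
  rw [fderivU V hV x g] at h1
  rw [real_inner_self_eq_norm_sq] at h1
  rw [abs_of_nonneg (by positivity)] at h1
  simp only [Finset.univ_unique, Finset.prod_const, Finset.card_singleton, pow_one] at h1
  have hM : 0 ≤ C 1 * max 1 (nm x ^ p 1) := by
    apply mul_nonneg hC1
    exact le_trans zero_le_one (le_max_left _ _)
  have hle : C 1 * max 1 (nm x ^ p 1) * nm g ≤ C 1 * max 1 (nm x ^ p 1) * ‖g‖ :=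
    mul_le_mul_of_nonneg_left (hnm g).1 hM
  nlinarith [norm_nonneg g]

theorem ratio_eq (K : ℝ) (hK : K ≠ 0) (p q a b : ℝ) :
    Real.exp p * (K * Real.exp a) / (Real.exp q * (K * Real.exp b)) =
      Real.exp (p + a - (q + b)) := by
  rw [Real.exp_sub, Real.exp_add, Real.exp_add]
  field_simp

theorem acc_eq (h : ℝ) (V : Ed d → ℝ) (hs : 0 < sVar h) (x w : Ed d) :
    acc h V x w = min 1 (Real.exp ((-Ufn V w + -‖x - hatM h V w‖ ^ 2 / (2 * sVar h)) -
      (-Ufn V x + -‖w - hatM h V x‖ ^ 2 / (2 * sVar h)))) := by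
  have hK : (2 * Real.pi * sVar h) ^ (-(d:ℝ)/2) ≠ 0 := by
    have : (0:ℝ) < 2 * Real.pi * sVar h := by positivity
    exact (Real.rpow_pos_of_pos this _).ne'
  unfold acc gaussDens
  rw [ratio_eq _ hK]

theorem gradCont (V : Ed d → ℝ) (hV : ContDiff ℝ 4 V) :
    Continuous (fun x => gradient V x) := by
  unfold gradient
  exact (InnerProductSpace.toDual ℝ (Ed d)).symm.continuous.comp
    (hV.continuous_fderiv (by norm_num))

theorem hatMCont (h : ℝ) (V : Ed d → ℝ) (hV : ContDiff ℝ 4 V) :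
    Continuous (hatM h V) := by
  unfold hatM
  exact (continuous_id.sub (continuous_id.const_smul (h / 2))).sub
    ((gradCont V hV).const_smul (h / 2))

theorem UfnCont (V : Ed d → ℝ) (hV : ContDiff ℝ 4 V) : Continuous (Ufn V) := by
  unfold Ufn
  exact ((continuous_norm.pow 2).div_const 2).add hV.continuous

theorem accMeas (h : ℝ) (V : Ed d → ℝ) (hV : ContDiff ℝ 4 V) (q : Ed d) :
    Measurable (fun w => acc h V q w) := by
  have hUc := UfnCont V hV
  have hhc := hatMCont h V hV
  unfold acc gaussDens
  apply Measurable.min measurable_const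
  apply Measurable.div
  · apply Continuous.measurable
    apply Continuous.mul
    · exact Real.continuous_exp.comp hUc.neg
    · apply continuous_const.mul
      apply Real.continuous_exp.comp
      apply Continuous.div_const
      exact (((continuous_const.sub hhc).norm.pow 2)).neg
  · apply Continuous.measurable
    apply continuous_const.mul
    apply continuous_const.mul
    apply Real.continuous_exp.comp
    apply Continuous.div_const
    exact (((continuous_id.sub continuous_const).norm.pow 2)).neg

theorem malaCplMeas (h : ℝ) (V : Ed d → ℝ) (hV : ContDiff ℝ 4 V) (x y : Ed d) :
    Measurable (malaCpl h V x y) := by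
  set xh := hatM h V x
  set yh := hatM h V y
  have hzm : Measurable fun ω : (Ed d × ℝ) × ℝ => ω.1.1 := measurable_fst.comp measurable_fst
  have hum : Measurable fun ω : (Ed d × ℝ) × ℝ => ω.1.2 := measurable_snd.comp measurable_fst
  have hX'm : Measurable fun ω : (Ed d × ℝ) × ℝ => xh + Real.sqrt (sVar h) • ω.1.1 :=
    measurable_const.add (by exact hzm.const_smul (Real.sqrt (sVar h)))
  have hpc : Continuous fun w : Ed d => propRatio h xh yh w := by
    unfold propRatio
    apply Real.continuous_exp.comp
    apply Continuous.div_const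
    exact ((continuous_id.sub continuous_const).norm.pow 2).sub
      ((continuous_id.sub continuous_const).norm.pow 2)
  have hS1 : MeasurableSet {ω : (Ed d × ℝ) × ℝ |
      ω.1.2 ≤ propRatio h xh yh (xh + Real.sqrt (sVar h) • ω.1.1)} :=
    measurableSet_le hum (hpc.measurable.comp hX'm)
  have hreflc : Continuous fun z : Ed d => reflPt h xh yh z := by
    unfold reflPt
    apply continuous_const.add
    refine (continuous_const_smul (Real.sqrt (sVar h))).comp' ?_
    fun_prop
  have hreflm : Measurable fun ω : (Ed d × ℝ) × ℝ => reflPt h xh yh ω.1.1 :=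
    hreflc.measurable.comp hzm
  have hY'm : Measurable fun ω : (Ed d × ℝ) × ℝ =>
      (if ω.1.2 ≤ propRatio h xh yh (xh + Real.sqrt (sVar h) • ω.1.1) then
        xh + Real.sqrt (sVar h) • ω.1.1 else reflPt h xh yh ω.1.1) :=
    Measurable.ite hS1 hX'm hreflm
  apply Measurable.prodMk
  · exact Measurable.ite
      (measurableSet_le measurable_snd ((accMeas h V hV x).comp hX'm)) hX'm measurable_const
  · exact Measurable.ite
      (measurableSet_le measurable_snd ((accMeas h V hV y).comp hY'm)) hY'm measurable_const

set_option maxHeartbeats 1000000 in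
/-- Lemma 6.1: under (d1) and (d2), for every `R > 0` there are
constants `p, h₀ > 0` such that for every `h ∈ (0,h₀)` the coupled MALA chains started
in the `‖·‖₋`-ball of radius `R` at distance `|x−y| ≤ √h` meet in one step with
probability at least `p`. -/
theorem stmt19 (d : ℕ) (hd : 1 ≤ d)
    (V : Ed d → ℝ) (hV : ContDiff ℝ 4 V)
    (nm : Seminorm ℝ (Ed d)) (hnm : NormComp d nm)
    (C : ℕ → ℝ) (p : ℕ → ℕ) (hC : ∀ n, 0 ≤ C n)
    (Kc Rc : ℝ) (hKc : 0 < Kc) (hRc : 0 < Rc)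
    (hd1 : CondD1 V nm C p) (hd2 : CondD2 V Kc Rc)
    (R : ℝ) (hR : 0 < R) :
    ∃ pr h₀ : ℝ, 0 < pr ∧ 0 < h₀ ∧
      ∀ h : ℝ, 0 < h → h < h₀ →
      ∀ x y : Ed d, nm x ≤ R → nm y ≤ R → ‖x - y‖ ≤ Real.sqrt h →
        pr ≤ ((malaMeasure h V x y) {w | w.1 = w.2}).toReal := by
  have hdR : (1:ℝ) ≤ d := by exact_mod_cast hd
  obtain ⟨A, hAdef⟩ : ∃ A : ℝ, A = d * R := ⟨_, rfl⟩
  have hA : 0 < A := by rw [hAdef]; positivity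
  obtain ⟨G, hGdef⟩ : ∃ G : ℝ, G = C 1 * max 1 ((A + 1) ^ p 1) := ⟨_, rfl⟩
  have hG0 : 0 ≤ G := by
    rw [hGdef]
    exact mul_nonneg (hC 1) (le_trans zero_le_one (le_max_left _ _))
  obtain ⟨B, hBdef⟩ : ∃ B : ℝ, B = G + A + 1 := ⟨_, rfl⟩
  have hB1 : 1 ≤ B := by rw [hBdef]; linarith
  have hgradV : ∀ w : Ed d, ‖w‖ ≤ A + 1 → ‖gradient V w‖ ≤ B := by
    intro w hw
    have h1 := gradBound V hV nm hnm C p (hC 1) hd1 w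
    have h2 : max 1 (nm w ^ p 1) ≤ max 1 ((A + 1) ^ p 1) := by
      apply max_le_max le_rfl
      exact pow_le_pow_left₀ (apply_nonneg nm w) (le_trans (hnm w).1 hw) _
    have h3 : ‖w + gradient V w‖ ≤ G := by
      rw [hGdef]
      exact le_trans h1 (mul_le_mul_of_nonneg_left h2 (hC 1))
    have h4 : gradient V w = (w + gradient V w) - w := by abel
    rw [h4]
    calc ‖(w + gradient V w) - w‖ ≤ ‖w + gradient V w‖ + ‖w‖ := norm_sub_le _ _
      _ ≤ G + (A + 1) := add_le_add h3 hw
      _ = B := by rw [hBdef]; ring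
  obtain ⟨c₁, hc₁def⟩ : ∃ c : ℝ, c = A + B + 1 := ⟨_, rfl⟩
  obtain ⟨c₂, hc₂def⟩ : ∃ c : ℝ, c = B + 2 := ⟨_, rfl⟩
  obtain ⟨c₃, hc₃def⟩ : ∃ c : ℝ, c = c₁ + A + B + 1 := ⟨_, rfl⟩
  obtain ⟨c₄, hc₄def⟩ : ∃ c : ℝ, c = c₃ + 1 := ⟨_, rfl⟩
  have hc₁2 : 2 ≤ c₁ := by rw [hc₁def]; linarith
  have hc₂0 : 0 ≤ c₂ := by rw [hc₂def]; linarith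
  have hc₃0 : 0 ≤ c₃ := by rw [hc₃def]; linarith
  have hc₄0 : 0 ≤ c₄ := by rw [hc₄def]; linarith
  have hc₃c₄ : c₃ ≤ c₄ := by rw [hc₄def]; linarith
  have hB0 : (0:ℝ) ≤ B := by linarith
  obtain ⟨B₀, hB₀⟩ := (isCompact_closedBall (0 : Ed d) (A + 1)).exists_bound_of_continuousOn
      (UfnCont V hV).continuousOn
  obtain ⟨BU, hBUdef⟩ : ∃ b : ℝ, b = max B₀ 0 := ⟨_, rfl⟩
  have hBU0 : (0:ℝ) ≤ BU := by rw [hBUdef]; exact le_max_right _ _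
  have hBU : ∀ w : Ed d, ‖w‖ ≤ A + 1 → |Ufn V w| ≤ BU := by
    intro w hw
    have := hB₀ w (by simpa [Metric.mem_closedBall, dist_zero_right] using hw)
    rw [Real.norm_eq_abs] at this
    rw [hBUdef]
    exact le_trans this (le_max_left _ _)
  obtain ⟨ρ, hρdef⟩ : ∃ r : ℝ, r = Real.exp (-(2/3*(c₂+1)^2)) := ⟨_, rfl⟩
  obtain ⟨α₀, hα₀def⟩ : ∃ a : ℝ, a = Real.exp (-(2*BU + 2/3*c₄^2)) := ⟨_, rfl⟩
  have hρpos : 0 < ρ := by rw [hρdef]; exact Real.exp_pos _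
  have hα₀pos : 0 < α₀ := by rw [hα₀def]; exact Real.exp_pos _
  have hρ1 : ρ ≤ 1 := by
    rw [hρdef]
    exact Real.exp_le_one_iff.mpr (neg_nonpos.mpr (by positivity))
  have hα₀1 : α₀ ≤ 1 := by
    rw [hα₀def]
    refine Real.exp_le_one_iff.mpr (neg_nonpos.mpr ?_)
    have : (0:ℝ) ≤ c₄^2 := sq_nonneg _
    linarith
  haveI hgip : IsProbabilityMeasure (stdGaussian d) := by
    rw [_root_.stdGaussian]
    exact Measure.isProbabilityMeasure_map (MeasurableEquiv.measurable _).aemeasurable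
  haveI huip : IsProbabilityMeasure unif01 := by
    constructor
    rw [unif01, Measure.restrict_apply MeasurableSet.univ, Set.univ_inter, Real.volume_Ioc]
    norm_num
  set gm := stdGaussian d (Metric.closedBall (0:Ed d) 1) with hgmdef
  have hgm : 0 < gm := gaussPos hd
  have hgmtop : gm ≠ ⊤ := measure_ne_top _ _
  refine ⟨gm.toReal * ρ * α₀, ((c₁ + 1)⁻¹) ^ 2, ?_, ?_, ?_⟩
  · have : 0 < gm.toReal := ENNReal.toReal_pos hgm.ne' hgmtop
    positivity
  · have h1 : (0:ℝ) < c₁ + 1 := by linarith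
    positivity
  intro h hh0 hhh₀ x y hxR hyR hxy
  have hh₀1 : ((c₁ + 1)⁻¹) ^ 2 ≤ 1 := by
    have h1 : (1:ℝ) ≤ c₁ + 1 := by linarith
    have h2 : (c₁+1)⁻¹ ≤ 1 := by
      rw [inv_le_one_iff₀]; right; exact h1
    have h3 : (0:ℝ) ≤ (c₁+1)⁻¹ := by positivity
    exact pow_le_one₀ h3 h2
  have hh1 : h ≤ 1 := le_trans hhh₀.le hh₀1
  obtain ⟨t, htdef⟩ : ∃ t : ℝ, t = Real.sqrt h := ⟨_, rfl⟩
  rw [← htdef] at hxy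
  have ht0 : 0 < t := by rw [htdef]; exact Real.sqrt_pos.mpr hh0
  have ht2 : t^2 = h := by rw [htdef]; exact Real.sq_sqrt hh0.le
  have ht1 : t ≤ 1 := by
    rw [htdef, show (1:ℝ) = Real.sqrt 1 by simp]
    exact Real.sqrt_le_sqrt hh1
  have htinv : t ≤ (c₁+1)⁻¹ := by
    rw [htdef]
    calc Real.sqrt h ≤ Real.sqrt (((c₁ + 1)⁻¹) ^ 2) := Real.sqrt_le_sqrt hhh₀.le
      _ = (c₁+1)⁻¹ := Real.sqrt_sq (by positivity)
  have htc₁ : t * c₁ ≤ 1 := by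
    have h1 : t * (c₁ + 1) ≤ (c₁+1)⁻¹ * (c₁+1) :=
      mul_le_mul_of_nonneg_right htinv (by linarith)
    rw [inv_mul_cancel₀ (by linarith : c₁ + 1 ≠ 0)] at h1
    have h2 : t * c₁ ≤ t * (c₁ + 1) :=
      mul_le_mul_of_nonneg_left (by linarith) ht0.le
    linarith
  have hht : h ≤ t := by
    rw [← ht2, sq]
    exact mul_le_of_le_one_left ht0.le ht1
  have hhsq : h * h ≤ h * 1 := mul_le_mul_of_nonneg_left hh1 hh0.le
  have hhe : h^2 = h * h := sq h
  have hs0 : 0 < sVar h := by unfold sVar; linarith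
  have hsh : sVar h ≤ h := by unfold sVar; linarith [sq_nonneg h]
  have hs34 : 3/4 * h ≤ sVar h := by unfold sVar; linarith
  have hsq : Real.sqrt (sVar h) ≤ t := by rw [htdef]; exact Real.sqrt_le_sqrt hsh
  have hsq0 : 0 ≤ Real.sqrt (sVar h) := Real.sqrt_nonneg _
  have hxA : ‖x‖ ≤ A := by
    rw [hAdef]
    calc ‖x‖ ≤ d * nm x := (hnm x).2
      _ ≤ d * R := mul_le_mul_of_nonneg_left hxR (by positivity)
  have hyA : ‖y‖ ≤ A := by
    rw [hAdef]
    calc ‖y‖ ≤ d * nm y := (hnm y).2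
      _ ≤ d * R := mul_le_mul_of_nonneg_left hyR (by positivity)
  have hgx : ‖gradient V x‖ ≤ B := hgradV x (by linarith)
  have hgy : ‖gradient V y‖ ≤ B := hgradV y (by linarith)
  set xh := hatM h V x with hxhdef
  set yh := hatM h V y with hyhdef
  -- pointwise key facts
  have keys : ∀ z : Ed d, ‖z‖ ≤ 1 →
      ρ ≤ propRatio h xh yh (xh + Real.sqrt (sVar h) • z) ∧
      α₀ ≤ acc h V x (xh + Real.sqrt (sVar h) • z) ∧
      α₀ ≤ acc h V y (xh + Real.sqrt (sVar h) • z) := by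
    intro z hz
    set X' := xh + Real.sqrt (sVar h) • z with hX'def
    have hnz : 0 ≤ ‖z‖ := norm_nonneg z
    have hsz : ‖Real.sqrt (sVar h) • z‖ ≤ t := by
      rw [norm_smul, Real.norm_eq_abs, abs_of_nonneg hsq0]
      have := mul_le_mul_of_nonneg_left hz hsq0
      linarith
    have f1 : ‖X' - x‖ ≤ t * c₁ := by
      have e1 : X' - x = (-(h/2)) • x + (-(h/2)) • gradient V x + Real.sqrt (sVar h) • z := by
        rw [hX'def, hxhdef]; unfold hatM; module
      rw [e1]
      have n1 : ‖(-(h/2)) • x‖ ≤ h/2 * A := by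
        rw [norm_smul, Real.norm_eq_abs, abs_neg, abs_of_nonneg (by linarith)]
        exact mul_le_mul_of_nonneg_left hxA (by linarith)
      have n2 : ‖(-(h/2)) • gradient V x‖ ≤ h/2 * B := by
        rw [norm_smul, Real.norm_eq_abs, abs_neg, abs_of_nonneg (by linarith)]
        exact mul_le_mul_of_nonneg_left hgx (by linarith)
      calc ‖(-(h/2)) • x + (-(h/2)) • gradient V x + Real.sqrt (sVar h) • z‖
          ≤ ‖(-(h/2)) • x‖ + ‖(-(h/2)) • gradient V x‖ + ‖Real.sqrt (sVar h) • z‖ :=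
            norm_add₃_le
        _ ≤ h/2 * A + h/2 * B + t := by linarith [hsz]
        _ ≤ t * c₁ := by
            rw [hc₁def]
            have g1 : h * A ≤ t * A := mul_le_mul_of_nonneg_right hht hA.le
            have g2 : h * B ≤ t * B := mul_le_mul_of_nonneg_right hht hB0
            have g3 : (0:ℝ) ≤ t * A := mul_nonneg ht0.le hA.le
            have g4 : (0:ℝ) ≤ t * B := mul_nonneg ht0.le hB0
            linarith [g1, g2, g3, g4]
    have f2 : ‖X'‖ ≤ A + 1 := by
      have e2 : X' = x + (X' - x) := by abel
      rw [e2]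
      calc ‖x + (X' - x)‖ ≤ ‖x‖ + ‖X' - x‖ := norm_add_le _ _
        _ ≤ A + t * c₁ := add_le_add hxA f1
        _ ≤ A + 1 := by linarith
    have hgX' : ‖gradient V X'‖ ≤ B := hgradV _ f2
    have hUx : |Ufn V x| ≤ BU := hBU x (by linarith)
    have hUy : |Ufn V y| ≤ BU := hBU y (by linarith)
    have hUX' : |Ufn V X'| ≤ BU := hBU X' f2
    have f3 : ‖xh - yh‖ ≤ t * c₂ := by
      have e3 : xh - yh =
          (1 - h/2) • (x - y) + (-(h/2)) • gradient V x + (h/2) • gradient V y := by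
        rw [hxhdef, hyhdef]; unfold hatM; module
      rw [e3]
      have n1 : ‖(1 - h/2) • (x - y)‖ ≤ t := by
        rw [norm_smul, Real.norm_eq_abs, abs_of_nonneg (by linarith)]
        have g1 : (1 - h/2) * ‖x - y‖ ≤ 1 * ‖x - y‖ :=
          mul_le_mul_of_nonneg_right (by linarith) (norm_nonneg _)
        linarith
      have n2 : ‖(-(h/2)) • gradient V x‖ ≤ h/2 * B := by
        rw [norm_smul, Real.norm_eq_abs, abs_neg, abs_of_nonneg (by linarith)]
        exact mul_le_mul_of_nonneg_left hgx (by linarith)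
      have n3 : ‖(h/2) • gradient V y‖ ≤ h/2 * B := by
        rw [norm_smul, Real.norm_eq_abs, abs_of_nonneg (by linarith)]
        exact mul_le_mul_of_nonneg_left hgy (by linarith)
      calc ‖(1 - h/2) • (x - y) + (-(h/2)) • gradient V x + (h/2) • gradient V y‖
          ≤ ‖(1 - h/2) • (x - y)‖ + ‖(-(h/2)) • gradient V x‖ + ‖(h/2) • gradient V y‖ :=
            norm_add₃_le
        _ ≤ t + h/2 * B + h/2 * B := by linarith
        _ ≤ t * c₂ := by
            rw [hc₂def]
            have g2 : h * B ≤ t * B := mul_le_mul_of_nonneg_right hht hB0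
            have g3 : (0:ℝ) ≤ t * B := mul_nonneg ht0.le hB0
            linarith [g2, g3, ht0.le]
    have f4 : ‖X' - yh‖ ≤ t * (c₂ + 1) := by
      have e4 : X' - yh = (xh - yh) + Real.sqrt (sVar h) • z := by rw [hX'def]; abel
      rw [e4]
      calc ‖(xh - yh) + Real.sqrt (sVar h) • z‖
          ≤ ‖xh - yh‖ + ‖Real.sqrt (sVar h) • z‖ := norm_add_le _ _
        _ ≤ t * c₂ + t := by linarith
        _ = t * (c₂ + 1) := by ring
    have f5 : ‖x - hatM h V X'‖ ≤ t * c₃ := by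
      have e5 : x - hatM h V X' = (x - X') + ((h/2) • X' + (h/2) • gradient V X') := by
        unfold hatM; module
      rw [e5]
      have n1 : ‖x - X'‖ ≤ t * c₁ := by rw [norm_sub_rev]; exact f1
      have n2 : ‖(h/2) • X'‖ ≤ h/2 * (A + 1) := by
        rw [norm_smul, Real.norm_eq_abs, abs_of_nonneg (by linarith)]
        exact mul_le_mul_of_nonneg_left f2 (by linarith)
      have n3 : ‖(h/2) • gradient V X'‖ ≤ h/2 * B := by
        rw [norm_smul, Real.norm_eq_abs, abs_of_nonneg (by linarith)]
        exact mul_le_mul_of_nonneg_left hgX' (by linarith)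
      calc ‖(x - X') + ((h/2) • X' + (h/2) • gradient V X')‖
          ≤ ‖x - X'‖ + (‖(h/2) • X'‖ + ‖(h/2) • gradient V X'‖) :=
            le_trans (norm_add_le _ _) (by gcongr; exact norm_add_le _ _)
        _ ≤ t * c₁ + (h/2 * (A + 1) + h/2 * B) := by linarith
        _ ≤ t * c₃ := by
            rw [hc₃def]
            have g1 : h * (A+1) ≤ t * (A+1) := mul_le_mul_of_nonneg_right hht (by linarith)
            have g2 : h * B ≤ t * B := mul_le_mul_of_nonneg_right hht hB0
            have g5 : (0:ℝ) ≤ t * (A+1) := mul_nonneg ht0.le (by linarith)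
            have g6 : (0:ℝ) ≤ t * B := mul_nonneg ht0.le hB0
            linarith [g1, g2, g5, g6]
    have f6 : ‖y - hatM h V X'‖ ≤ t * c₄ := by
      have e6 : y - hatM h V X' = (y - x) + (x - hatM h V X') := by abel
      rw [e6]
      calc ‖(y - x) + (x - hatM h V X')‖
          ≤ ‖y - x‖ + ‖x - hatM h V X'‖ := norm_add_le _ _
        _ ≤ t + t * c₃ := by rw [norm_sub_rev]; exact add_le_add hxy f5
        _ = t * c₄ := by rw [hc₄def]; ring
    have hXxh : X' - xh = Real.sqrt (sVar h) • z := by rw [hX'def]; abel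
    refine ⟨?_, ?_, ?_⟩
    · -- proposal ratio bound
      simp only [propRatio]
      rw [hρdef]
      apply Real.exp_le_exp.mpr
      rw [le_div_iff₀ (by positivity : (0:ℝ) < 2 * sVar h)]
      have g1 : ‖X' - yh‖^2 ≤ (t*(c₂+1))^2 := pow_le_pow_left₀ (norm_nonneg _) f4 2
      have g2 : (t*(c₂+1))^2 = h * (c₂+1)^2 := by rw [mul_pow, ht2]
      have g3 : (c₂+1)^2 * (3/4*h) ≤ (c₂+1)^2 * sVar h :=
        mul_le_mul_of_nonneg_left hs34 (sq_nonneg _)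
      linarith [sq_nonneg ‖X' - xh‖, g1, g2, g3]
    · -- acceptance at x
      rw [acc_eq h V hs0 x X']
      refine le_min hα₀1 ?_
      rw [hα₀def]
      apply Real.exp_le_exp.mpr
      have d1 : ‖x - hatM h V X'‖^2 / (2 * sVar h) ≤ 2/3 * c₄^2 := by
        rw [div_le_iff₀ (by positivity : (0:ℝ) < 2 * sVar h)]
        have g1 : ‖x - hatM h V X'‖^2 ≤ h * c₃^2 := by
          have := pow_le_pow_left₀ (norm_nonneg _) f5 2
          rw [mul_pow, ht2] at this
          exact this
        have g2 : c₃^2 ≤ c₄^2 := pow_le_pow_left₀ hc₃0 hc₃c₄ 2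
        have g3 : c₄^2 * (3/4*h) ≤ c₄^2 * sVar h :=
          mul_le_mul_of_nonneg_left hs34 (sq_nonneg _)
        have g4 : c₃^2 * h ≤ c₄^2 * h := mul_le_mul_of_nonneg_right g2 hh0.le
        linarith [g1, g3, g4]
      have d2 : (0:ℝ) ≤ ‖X' - hatM h V x‖^2 / (2 * sVar h) := by positivity
      have a1 := abs_le.mp hUx
      have a2 := abs_le.mp hUX'
      have expand : -Ufn V X' + -‖x - hatM h V X'‖ ^ 2 / (2 * sVar h) -
          (-Ufn V x + -‖X' - hatM h V x‖ ^ 2 / (2 * sVar h)) =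
          Ufn V x - Ufn V X' - ‖x - hatM h V X'‖^2 / (2 * sVar h)
            + ‖X' - hatM h V x‖^2 / (2 * sVar h) := by ring
      rw [expand]
      linarith
    · -- acceptance at y
      rw [acc_eq h V hs0 y X']
      refine le_min hα₀1 ?_
      rw [hα₀def]
      apply Real.exp_le_exp.mpr
      have d1 : ‖y - hatM h V X'‖^2 / (2 * sVar h) ≤ 2/3 * c₄^2 := by
        rw [div_le_iff₀ (by positivity : (0:ℝ) < 2 * sVar h)]
        have g1 : ‖y - hatM h V X'‖^2 ≤ h * c₄^2 := by
          have := pow_le_pow_left₀ (norm_nonneg _) f6 2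
          rw [mul_pow, ht2] at this
          exact this
        have g3 : c₄^2 * (3/4*h) ≤ c₄^2 * sVar h :=
          mul_le_mul_of_nonneg_left hs34 (sq_nonneg _)
        linarith [g1, g3]
      have d2 : (0:ℝ) ≤ ‖X' - hatM h V y‖^2 / (2 * sVar h) := by positivity
      have a1 := abs_le.mp hUy
      have a2 := abs_le.mp hUX'
      have expand : -Ufn V X' + -‖y - hatM h V X'‖ ^ 2 / (2 * sVar h) -
          (-Ufn V y + -‖X' - hatM h V y‖ ^ 2 / (2 * sVar h)) =
          Ufn V y - Ufn V X' - ‖y - hatM h V X'‖^2 / (2 * sVar h)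
            + ‖X' - hatM h V y‖^2 / (2 * sVar h) := by ring
      rw [expand]
      linarith
  -- measure-theoretic part
  have hmeas := malaCplMeas h V hV x y
  have hset : MeasurableSet {w : Ed d × Ed d | w.1 = w.2} :=
    (isClosed_eq continuous_fst continuous_snd).measurableSet
  set P := ((stdGaussian d).prod unif01).prod unif01 with hPdef
  set S : Set ((Ed d × ℝ) × ℝ) :=
    (Metric.closedBall (0:Ed d) 1 ×ˢ Ioc (0:ℝ) ρ) ×ˢ Ioc (0:ℝ) α₀ with hSdef
  have hsub : S ⊆ malaCpl h V x y ⁻¹' {w | w.1 = w.2} := by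
    rintro ⟨⟨z, u⟩, v⟩ ⟨⟨hz, hu⟩, hv⟩
    simp only [Metric.mem_closedBall, dist_zero_right] at hz
    obtain ⟨k1, k2, k3⟩ := keys z hz
    have hmc : malaCpl h V x y ((z,u),v) =
        (if v ≤ acc h V x (xh + Real.sqrt (sVar h) • z) then xh + Real.sqrt (sVar h) • z else x,
         if v ≤ acc h V y (if u ≤ propRatio h xh yh (xh + Real.sqrt (sVar h) • z)
             then xh + Real.sqrt (sVar h) • z else reflPt h xh yh z)
           then (if u ≤ propRatio h xh yh (xh + Real.sqrt (sVar h) • z)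
             then xh + Real.sqrt (sVar h) • z else reflPt h xh yh z) else y) := rfl
    rw [Set.mem_preimage, hmc, if_pos (le_trans hu.2 k1), if_pos (le_trans hv.2 k2),
      if_pos (le_trans hv.2 k3)]
    exact rfl
  have hunif : ∀ a : ℝ, 0 < a → a ≤ 1 → unif01 (Ioc 0 a) = ENNReal.ofReal a := by
    intro a ha0 ha1
    rw [unif01, Measure.restrict_apply measurableSet_Ioc, Ioc_inter_Ioc, max_self,
      min_eq_left ha1, Real.volume_Ioc, sub_zero]
  have hPS : P S = gm * ENNReal.ofReal ρ * ENNReal.ofReal α₀ := by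
    rw [hPdef, hSdef, Measure.prod_prod, Measure.prod_prod, hunif ρ hρpos hρ1,
      hunif α₀ hα₀pos hα₀1]
  have hpr_eq : gm.toReal * ρ * α₀ = (P S).toReal := by
    rw [hPS, ENNReal.toReal_mul, ENNReal.toReal_mul, ENNReal.toReal_ofReal hρpos.le,
      ENNReal.toReal_ofReal hα₀pos.le]
  have hmm : malaMeasure h V x y {w : Ed d × Ed d | w.1 = w.2} =
      P (malaCpl h V x y ⁻¹' {w | w.1 = w.2}) := by
    rw [malaMeasure, ← hPdef, Measure.map_apply hmeas hset]
  rw [hmm, hpr_eq]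
  exact ENNReal.toReal_mono (measure_ne_top P _) (measure_mono hsub)

end
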